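/- For every ε ∈ (0, π) there exists a constant C > 0 such that |S(z)| ≤ C·(1 + log(1 + |z|)) for all z ∈ ℂ_ε; that is, S grows at most logarithmically at infinity in the sector. -/

import Mathlib

/-- `R_p = (p-1)^(p-1) / p^p`. -/
noncomputable def Rp (p : ℕ) : ℝ :=
  ((p - 1 : ℕ) : ℝ) ^ (p - 1) / (p : ℝ) ^ p

/-- The cut plane `Ω_p = ℂ ∖ [R_p, ∞)`. -/
noncomputable def cutPlane (p : ℕ) : Set ℂ :=
  (Complex.ofReal '' Set.Ici (Rp p))ᶜ

/-- The open sector `ℂ_ε = {z : |arg z| > ε}` (principal argument). -/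
def sector (ε : ℝ) : Set ℂ := {z : ℂ | ε < |Complex.arg z|}

lemma cutPlane_isOpen (p : ℕ) : IsOpen (cutPlane p) := by
  rw [cutPlane, isOpen_compl_iff]
  exact (Complex.isometry_ofReal.isClosedEmbedding.isClosedMap _ isClosed_Ici)

lemma Rp_pos {p : ℕ} (hp : 2 ≤ p) : 0 < Rp p := by
  have h1 : (0:ℝ) < ((p - 1 : ℕ) : ℝ) := by
    have : 1 ≤ p - 1 := by omega
    exact_mod_cast Nat.lt_of_lt_of_le Nat.zero_lt_one this
  have h2 : (0:ℝ) < (p : ℝ) := by exact_mod_cast (show 0 < p by omega)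
  rw [Rp]; exact div_pos (pow_pos h1 _) (pow_pos h2 _)

lemma derivS_eq (p : ℕ) (hp : 2 ≤ p) (T S : ℂ → ℂ)
    (hT : AnalyticOnNhd ℂ T (cutPlane p))
    (heq : ∀ z ∈ cutPlane p, z * T z ^ p - T z + 1 = 0)
    (hne : ∀ z ∈ cutPlane p, 1 - (p : ℂ) * z * T z ^ (p - 1) ≠ 0)
    (hS : AnalyticOnNhd ℂ S (cutPlane p))
    (hSF : ∀ z ∈ cutPlane p,
      Complex.exp (S z) = (1 - (p : ℂ) * z * T z ^ (p - 1))⁻¹)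
    (z : ℂ) (hz : z ∈ cutPlane p) :
    deriv S z * ((p : ℂ) - ((p : ℂ) - 1) * T z) ^ 2 = (p : ℂ) * T z ^ p := by
  obtain ⟨q, rfl⟩ : ∃ q, p = q + 2 := ⟨p - 2, by omega⟩
  have hsub1 : q + 2 - 1 = q + 1 := by omega
  have hsub2 : q + 1 - 1 = q := by omega
  have hU := cutPlane_isOpen (q + 2)
  have hTd : DifferentiableAt ℂ T z := (hT z hz).differentiableAt
  have hSd : DifferentiableAt ℂ S z := (hS z hz).differentiableAt
  -- derivative identity for T
  have h1 : HasDerivAt (fun w => w * T w ^ (q+2) - T w + 1)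
      (1 * T z ^ (q+2) + z * (↑(q+2) * T z ^ (q+2-1) * deriv T z) - deriv T z) z :=
    (((hasDerivAt_id z).mul (hTd.hasDerivAt.pow (q+2))).sub hTd.hasDerivAt).add_const 1
  have h2 : deriv (fun w => w * T w ^ (q+2) - T w + 1) z = 0 := by
    have hEE : (fun w => w * T w ^ (q+2) - T w + 1) =ᶠ[nhds z] (fun _ => 0) := by
      filter_upwards [hU.mem_nhds hz] with w hw using heq w hw
    rw [hEE.deriv_eq]; exact deriv_const z 0
  have eqT : 1 * T z ^ (q+2) + z * (↑(q+2) * T z ^ (q+2-1) * deriv T z) - deriv T z = 0 := by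
    rw [← h1.deriv]; exact h2
  -- derivative identity for S
  have h3 : HasDerivAt (fun w => Complex.exp (S w) * (1 - (↑(q+2):ℂ) * w * T w ^ (q+2-1)))
      ((Complex.exp (S z) * deriv S z) * (1 - (↑(q+2):ℂ) * z * T z ^ (q+2-1))
        + Complex.exp (S z) *
          (-(((↑(q+2):ℂ) * 1) * T z ^ (q+2-1)
            + ((↑(q+2):ℂ) * z) * (↑(q+2-1) * T z ^ (q+2-1-1) * deriv T z)))) z := by
    have hexp : HasDerivAt (fun w => Complex.exp (S w)) (Complex.exp (S z) * deriv S z) z :=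
      (Complex.hasDerivAt_exp (S z)).comp z hSd.hasDerivAt
    have hm : HasDerivAt (fun w => (↑(q+2):ℂ) * w) ((↑(q+2):ℂ) * 1) z :=
      (hasDerivAt_id z).const_mul _
    exact hexp.mul ((hm.mul (hTd.hasDerivAt.pow (q+2-1))).const_sub 1)
  have h4 : deriv (fun w => Complex.exp (S w) * (1 - (↑(q+2):ℂ) * w * T w ^ (q+2-1))) z = 0 := by
    have hEE : (fun w => Complex.exp (S w) * (1 - (↑(q+2):ℂ) * w * T w ^ (q+2-1)))
        =ᶠ[nhds z] (fun _ => 1) := by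
      filter_upwards [hU.mem_nhds hz] with w hw
      rw [hSF w hw, inv_mul_cancel₀ (hne w hw)]
    rw [hEE.deriv_eq]; exact deriv_const z 1
  have eqS : (Complex.exp (S z) * deriv S z) * (1 - (↑(q+2):ℂ) * z * T z ^ (q+2-1))
        + Complex.exp (S z) *
          (-(((↑(q+2):ℂ) * 1) * T z ^ (q+2-1)
            + ((↑(q+2):ℂ) * z) * (↑(q+2-1) * T z ^ (q+2-1-1) * deriv T z))) = 0 := by
    rw [← h3.deriv]; exact h4
  rw [hsub1] at eqT
  rw [hsub1, hsub2] at eqS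
  push_cast at eqT eqS ⊢
  have hE : Complex.exp (S z) ≠ 0 := Complex.exp_ne_zero _
  have e1 : z * T z ^ (q+2) - T z + 1 = 0 := by
    have := heq z hz; push_cast at this; exact this
  have eqS' : deriv S z * (1 - ((q:ℂ)+2) * z * T z ^ (q+1))
      = ((q:ℂ)+2) * T z ^ (q+1) + ((q:ℂ)+2) * ((q:ℂ)+1) * z * T z ^ q * deriv T z := by
    apply mul_left_cancel₀ hE
    linear_combination eqS
  have eqT' : deriv T z * (1 - ((q:ℂ)+2) * z * T z ^ (q+1)) = T z ^ (q+2) := by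
    linear_combination -eqT
  have hQ : ((q:ℂ)+2) - (((q:ℂ)+2) - 1) * T z
      = (1 - ((q:ℂ)+2) * z * T z ^ (q+1)) * T z := by
    linear_combination ((q:ℂ)+2) * e1
  rw [hQ]
  linear_combination (T z ^ 2 * (1 - ((q:ℂ)+2) * z * T z ^ (q+1))) * eqS'
    + (((q:ℂ)+2) * ((q:ℂ)+1) * z * T z ^ (q+2)) * eqT'
    + (-(((q:ℂ)+2)) * T z ^ (q+2)) * e1

lemma zderivS_bound (p : ℕ) (hp : 2 ≤ p) (T S : ℂ → ℂ)
    (hT : AnalyticOnNhd ℂ T (cutPlane p))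
    (heq : ∀ z ∈ cutPlane p, z * T z ^ p - T z + 1 = 0)
    (hne : ∀ z ∈ cutPlane p, 1 - (p : ℂ) * z * T z ^ (p - 1) ≠ 0)
    (hS : AnalyticOnNhd ℂ S (cutPlane p))
    (hSF : ∀ z ∈ cutPlane p,
      Complex.exp (S z) = (1 - (p : ℂ) * z * T z ^ (p - 1))⁻¹)
    (z : ℂ) (hz : z ∈ cutPlane p) (hz4 : 4 ≤ ‖z‖) :
    ‖z * deriv S z‖ ≤ 3 * p := by
  have e1 : z * T z ^ p = T z - 1 := by linear_combination heq z hz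
  have hnorm : ‖z‖ * ‖T z‖ ^ p = ‖T z - 1‖ := by
    rw [← norm_pow, ← norm_mul, e1]
  have htub : ‖T z - 1‖ ≤ ‖T z‖ + 1 := by
    calc ‖T z - 1‖ ≤ ‖T z‖ + ‖(1:ℂ)‖ := norm_sub_le _ _
    _ = ‖T z‖ + 1 := by simp
  have ht2 : ‖T z‖ ≤ 2 := by
    by_contra h
    push_neg at h
    have h1 : ‖T z‖ ^ 2 ≤ ‖T z‖ ^ p := pow_le_pow_right₀ (by linarith) hp
    have h3 : 4 * ‖T z‖ ^ 2 ≤ ‖z‖ * ‖T z‖ ^ p :=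
      mul_le_mul hz4 h1 (by positivity) (by linarith)
    nlinarith [h3, hnorm, htub, h]
  have hQ1 : 1 ≤ ‖(p : ℂ) - ((p : ℂ) - 1) * T z‖ := by
    by_contra h
    push_neg at h
    have hc1 : ‖((p:ℂ) - 1) * T z‖ = ((p:ℝ) - 1) * ‖T z‖ := by
      rw [norm_mul]
      congr 1
      have : ((p:ℂ) - 1) = (((p:ℝ) - 1 : ℝ) : ℂ) := by push_cast; ring
      rw [this, Complex.norm_real, Real.norm_eq_abs, abs_of_nonneg]
      have : (2:ℝ) ≤ (p:ℝ) := by exact_mod_cast hp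
      linarith
    have hc2 : ((p:ℝ) - 1) * ‖T z‖ ≥ ‖(p:ℂ)‖ - ‖(p : ℂ) - ((p : ℂ) - 1) * T z‖ := by
      rw [← hc1]
      have := norm_sub_norm_le ((p:ℂ)) ((p : ℂ) - ((p : ℂ) - 1) * T z)
      calc ‖(p:ℂ)‖ - ‖(p : ℂ) - ((p : ℂ) - 1) * T z‖
          ≤ ‖(p:ℂ) - ((p : ℂ) - ((p : ℂ) - 1) * T z)‖ := this
        _ = ‖((p:ℂ) - 1) * T z‖ := by ring_nf
    have hnp : ‖(p:ℂ)‖ = (p:ℝ) := by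
      rw [Complex.norm_natCast]
    have hp2 : (2:ℝ) ≤ (p:ℝ) := by exact_mod_cast hp
    have ht1 : 1 < ‖T z‖ := by
      rw [hnp] at hc2
      nlinarith [hc2, h, hp2]
    have h1 : ‖T z‖ ^ 2 ≤ ‖T z‖ ^ p := pow_le_pow_right₀ (by linarith) hp
    have h3 : 4 * ‖T z‖ ^ 2 ≤ ‖z‖ * ‖T z‖ ^ p :=
      mul_le_mul hz4 h1 (by positivity) (by linarith)
    nlinarith [h3, hnorm, htub, ht1]
  have hQ0 : (p : ℂ) - ((p : ℂ) - 1) * T z ≠ 0 := by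
    intro h0
    rw [h0] at hQ1
    simp at hQ1
    linarith
  have hkey := derivS_eq p hp T S hT heq hne hS hSF z hz
  have key : z * deriv S z = (p:ℂ) * (T z - 1) / ((p : ℂ) - ((p : ℂ) - 1) * T z) ^ 2 := by
    rw [eq_div_iff (pow_ne_zero 2 hQ0)]
    linear_combination z * hkey + (p:ℂ) * e1
  rw [key, norm_div, norm_mul, norm_pow, Complex.norm_natCast]
  have hnum : (p:ℝ) * ‖T z - 1‖ ≤ 3 * p := by
    have : ‖T z - 1‖ ≤ 3 := by linarith
    nlinarith [this, Nat.cast_nonneg (α := ℝ) p]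
  have hden : (1:ℝ) ≤ ‖(p : ℂ) - ((p : ℂ) - 1) * T z‖ ^ 2 := one_le_pow₀ hQ1
  calc (p:ℝ) * ‖T z - 1‖ / ‖(p : ℂ) - ((p : ℂ) - 1) * T z‖ ^ 2
      ≤ (p:ℝ) * ‖T z - 1‖ / 1 := by
        apply div_le_div_of_nonneg_left ?_ ?_ hden
        · positivity
        · norm_num
    _ ≤ 3 * p := by rw [div_one]; exact hnum

/-- Let `T` be analytic on `Ω_p` with `z T(z)^p − T(z) + 1 = 0` and
`1 − p z T(z)^{p−1} ≠ 0` there; set `F(z) = 1/(1 − p z T(z)^{p−1})`, and let `S` be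
analytic on `Ω_p` with `S(0) = 0` and `exp(S(z)) = F(z)` on `Ω_p`.  Then for every
`ε ∈ (0, π)` there is `C > 0` with `|S(z)| ≤ C (1 + log(1 + |z|))` for all `z ∈ ℂ_ε`. -/
theorem fussCatalan_S_log_growth (p : ℕ) (hp : 2 ≤ p) (T S : ℂ → ℂ)
    (hT : AnalyticOnNhd ℂ T (cutPlane p))
    (heq : ∀ z ∈ cutPlane p, z * T z ^ p - T z + 1 = 0)
    (hne : ∀ z ∈ cutPlane p, 1 - (p : ℂ) * z * T z ^ (p - 1) ≠ 0)
    (hS : AnalyticOnNhd ℂ S (cutPlane p)) (hS0 : S 0 = 0)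
    (hSF : ∀ z ∈ cutPlane p,
      Complex.exp (S z) = (1 - (p : ℂ) * z * T z ^ (p - 1))⁻¹)
    (ε : ℝ) (hε : ε ∈ Set.Ioo 0 Real.pi) :
    ∃ C : ℝ, 0 < C ∧ ∀ z ∈ sector ε,
      ‖S z‖ ≤ C * (1 + Real.log (1 + ‖z‖)) := by
  obtain ⟨hε0, hεπ⟩ := hε
  have hsub : ∀ w : ℂ, ε ≤ |Complex.arg w| → w ∈ cutPlane p := by
    intro w hw hmem
    obtain ⟨x, hx, rfl⟩ := hmem
    rw [Complex.arg_ofReal_of_nonneg (le_trans (Rp_pos hp).le hx)] at hw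
    simp at hw
    linarith
  -- the compact piece
  have hAclosed : IsClosed ({w : ℂ | ε ≤ |Complex.arg w|} ∪ {0}) := by
    rw [← isOpen_compl_iff]
    rw [isOpen_iff_mem_nhds]
    intro w hw
    simp only [Set.mem_compl_iff, Set.mem_union, Set.mem_setOf_eq, Set.mem_singleton_iff,
      not_or] at hw
    obtain ⟨hw1, hw2⟩ := hw
    push_neg at hw1
    have hslit : w ∈ Complex.slitPlane := by
      rw [Complex.mem_slitPlane_iff]
      by_contra hc
      push_neg at hc
      rcases lt_trichotomy w.re 0 with h | h | h
      · have : Complex.arg w = Real.pi ∨ Complex.arg w = -Real.pi ∨ w.im ≠ 0 := by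
          rcases eq_or_ne w.im 0 with him | him
          · left
            exact Complex.arg_eq_pi_iff.2 ⟨h, him⟩
          · right; right; exact him
        rcases this with h' | h' | h'
        · rw [h'] at hw1; rw [abs_of_pos Real.pi_pos] at hw1; linarith
        · rw [h'] at hw1; rw [abs_neg, abs_of_pos Real.pi_pos] at hw1; linarith
        · exact h' (hc.2)
      · apply hw2
        apply Complex.ext
        · simpa using h
        · simpa using hc.2
      · exact absurd h (not_lt.2 hc.1)
    have hcont : ContinuousAt (fun u : ℂ => |Complex.arg u|) w :=
      continuous_abs.continuousAt.comp (Complex.continuousAt_arg hslit)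
    have h1 : ∀ᶠ u in nhds w, |Complex.arg u| < ε := hcont.eventually_lt_const hw1
    have h2 : ∀ᶠ u in nhds w, u ≠ 0 := by
      have : IsOpen {u : ℂ | u ≠ 0} := isOpen_ne
      exact this.eventually_mem hw2
    filter_upwards [h1, h2] with u hu1 hu2
    simp only [Set.mem_compl_iff, Set.mem_union, Set.mem_setOf_eq, Set.mem_singleton_iff, not_or]
    exact ⟨not_le.2 hu1, hu2⟩
  have hKcomp : IsCompact (Metric.closedBall (0:ℂ) 4 ∩ ({w : ℂ | ε ≤ |Complex.arg w|} ∪ {0})) :=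
    (isCompact_closedBall _ _).inter_right hAclosed
  have hKsub : Metric.closedBall (0:ℂ) 4 ∩ ({w : ℂ | ε ≤ |Complex.arg w|} ∪ {0}) ⊆ cutPlane p := by
    rintro w ⟨-, hw | hw⟩
    · exact hsub w hw
    · simp only [Set.mem_singleton_iff] at hw
      subst hw
      intro hmem
      obtain ⟨x, hx, hx0⟩ := hmem
      have hx00 : x = 0 := by exact_mod_cast hx0
      have hxge : Rp p ≤ x := hx
      have := Rp_pos hp
      linarith
  obtain ⟨B, hB⟩ := hKcomp.exists_bound_of_continuousOn ((hS.continuousOn).mono hKsub)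
  refine ⟨max B 0 + 3 * p + 1, by positivity, ?_⟩
  intro z hz
  have hzle : ε ≤ |Complex.arg z| := le_of_lt hz
  have hzU : z ∈ cutPlane p := hsub z hzle
  have hlog : 0 ≤ Real.log (1 + ‖z‖) := Real.log_nonneg (by linarith [norm_nonneg z])
  have hp3 : (0:ℝ) ≤ 3 * p := by positivity
  by_cases hz4 : ‖z‖ ≤ 4
  · have hzK : z ∈ Metric.closedBall (0:ℂ) 4 ∩ ({w : ℂ | ε ≤ |Complex.arg w|} ∪ {0}) := by
      constructor
      · simpa [Metric.mem_closedBall, dist_zero_right] using hz4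
      · exact Or.inl hzle
    have h1 := hB z hzK
    have h2 : B ≤ max B 0 := le_max_left _ _
    nlinarith [hlog, h1, h2, le_max_right B 0]
  · push_neg at hz4
    have hr0 : (0:ℝ) < ‖z‖ := by linarith
    set θ := Complex.arg z with hθ
    set a := Real.log 4 with ha
    set b := Real.log ‖z‖ with hb
    have hab : a ≤ b := Real.log_le_log (by norm_num) hz4.le
    set w : ℝ → ℂ := fun s => Complex.exp (↑s + ↑θ * Complex.I) with hw
    have hwnorm : ∀ s, ‖w s‖ = Real.exp s := by
      intro s
      simp [hw, Complex.norm_exp]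
    have hwarg : ∀ s, Complex.arg (w s) = θ := by
      intro s
      have hws : w s = (↑(Real.exp s) : ℂ) * Complex.exp (↑θ * Complex.I) := by
        rw [hw]
        simp only []
        rw [Complex.exp_add, Complex.ofReal_exp]
      rw [hws, Complex.arg_real_mul _ (Real.exp_pos s), Complex.exp_mul_I]
      exact Complex.arg_cos_add_sin_mul_I ⟨Complex.neg_pi_lt_arg z, Complex.arg_le_pi z⟩
    have hwmem : ∀ s, w s ∈ cutPlane p := fun s => hsub _ (by rw [hwarg]; exact hzle)
    have hg : ∀ s ∈ Set.Icc a b, HasDerivAt (fun u : ℝ => S (w u)) (deriv S (w s) * w s) s := by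
      intro s _
      have hin : HasDerivAt (fun ζ : ℂ => Complex.exp (ζ + ↑θ * Complex.I)) (w s) (↑s : ℂ) := by
        have h := (Complex.hasDerivAt_exp ((↑s : ℂ) + ↑θ * Complex.I)).comp (↑s : ℂ)
          ((hasDerivAt_id ((↑s : ℂ))).add_const (↑θ * Complex.I))
        rw [mul_one] at h
        exact h
      have hout : HasDerivAt S (deriv S (w s)) (w s) :=
        ((hS _ (hwmem s)).differentiableAt).hasDerivAt
      exact (hout.comp (↑s : ℂ) hin).comp_ofReal
    have hbd : ∀ s ∈ Set.Icc a b, ‖deriv S (w s) * w s‖ ≤ 3 * p := by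
      intro s hs
      have h4 : (4:ℝ) ≤ ‖w s‖ := by
        rw [hwnorm]
        calc (4:ℝ) = Real.exp a := by rw [ha, Real.exp_log]; norm_num
          _ ≤ Real.exp s := Real.exp_le_exp.2 hs.1
      have := zderivS_bound p hp T S hT heq hne hS hSF (w s) (hwmem s) h4
      rwa [mul_comm] at this
    have hMVT := Convex.norm_image_sub_le_of_norm_hasDerivWithin_le
      (f := fun u : ℝ => S (w u)) (f' := fun s => deriv S (w s) * w s)
      (fun x hx => (hg x hx).hasDerivWithinAt) hbd (convex_Icc a b)
      (Set.left_mem_Icc.2 hab) (Set.right_mem_Icc.2 hab)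
    have hwb : w b = z := by
      have h1 : w b = Complex.exp (↑b + ↑θ * Complex.I) := rfl
      rw [h1, Complex.exp_add]
      have h2 : Complex.exp ((b : ℝ) : ℂ) = ((‖z‖ : ℝ) : ℂ) := by
        rw [hb, ← Complex.ofReal_exp, Real.exp_log hr0]
      rw [h2]
      simpa [hθ] using Complex.norm_mul_exp_arg_mul_I z
    have hwa : w a ∈ Metric.closedBall (0:ℂ) 4 ∩ ({u : ℂ | ε ≤ |Complex.arg u|} ∪ {0}) := by
      constructor
      · rw [Metric.mem_closedBall, dist_zero_right, hwnorm a, ha, Real.exp_log] <;> norm_num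
      · exact Or.inl (by rw [Set.mem_setOf_eq, hwarg]; exact hz.le)
    have hSwa := hB _ hwa
    rw [hwb] at hMVT
    have hba : ‖b - a‖ = b - a := by rw [Real.norm_eq_abs, abs_of_nonneg (by linarith)]
    rw [hba] at hMVT
    have hSz : ‖S z‖ ≤ B + 3 * p * (b - a) := by
      calc ‖S z‖ = ‖(S z - S (w a)) + S (w a)‖ := by rw [sub_add_cancel]
        _ ≤ ‖S z - S (w a)‖ + ‖S (w a)‖ := norm_add_le _ _
        _ ≤ 3 * p * (b - a) + B := add_le_add hMVT hSwa
        _ = B + 3 * p * (b - a) := by ring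
    have hba2 : b - a ≤ Real.log (1 + ‖z‖) := by
      have h1 : b ≤ Real.log (1 + ‖z‖) := Real.log_le_log hr0 (by linarith)
      have h2 : 0 ≤ a := Real.log_nonneg (by norm_num)
      linarith
    have hBmax : B ≤ max B 0 := le_max_left _ _
    have hmax0 : 0 ≤ max B 0 := le_max_right _ _
    nlinarith [hSz, hba2, hlog, hBmax, hmax0, hp3]
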